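/- Let μ : ℝ → ℝ be a nonnegative locally integrable function, let k ≥ 1 be an integer, let T > 0, let M ≥ 1, and set Δ = T/M with breakpoints τ_m = m·Δ. For a = (a_1, …, a_M) with all a_m ≥ 0, let λ_a(t) = Σ_{m=1}^M a_m · 1[τ_{m-1} ≤ t < τ_m]. Then the function a ↦ ∫_0^T f_k(t; λ_a, μ) dt is concave on the nonnegative orthant {a ∈ ℝ^M : a_m ≥ 0 for all m}, and for each fixed t the function a ↦ f_k(t; λ_a, μ) is concave on the same set. -/

import Mathlib

open MeasureTheory Real Set Filter Topology intervalIntegral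

/-- The upper incomplete Gamma function `Γ(k, x) = ∫_x^∞ s^{k-1} e^{-s} ds`. -/
noncomputable def uGamma (k : ℕ) (x : ℝ) : ℝ :=
  ∫ s in Set.Ioi x, s ^ (k - 1) * Real.exp (-s)

/-- `f_k(t; λ, μ) = (1/(k-1)!) ∫_0^t λ(τ) exp(-∫_τ^t λ) Γ(k, ∫_τ^t μ) dτ`. -/
noncomputable def fk (k : ℕ) (lam mu : ℝ → ℝ) (t : ℝ) : ℝ :=
  (1 / (Nat.factorial (k - 1) : ℝ)) *
    ∫ τ in (0:ℝ)..t,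
      lam τ * Real.exp (-∫ x in τ..t, lam x) * uGamma k (∫ x in τ..t, mu x)

/-! ### auxiliary facts -/

noncomputable def wfun (k : ℕ) (s : ℝ) : ℝ := s ^ (k - 1) * Real.exp (-s)

lemma wfun_cont (k : ℕ) : Continuous (wfun k) := by
  unfold wfun; continuity

lemma wfun_nonneg (k : ℕ) {s : ℝ} (hs : 0 ≤ s) : 0 ≤ wfun k s :=
  mul_nonneg (pow_nonneg hs _) (Real.exp_pos _).le

lemma pow_mul_exp_integrableOn_Ioi0 (n : ℕ) :
    IntegrableOn (fun s : ℝ => s ^ n * Real.exp (-s)) (Ioi (0:ℝ)) := by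
  have h := Real.GammaIntegral_convergent (s := (n:ℝ) + 1) (by positivity)
  refine h.congr_fun (fun x hx => ?_) measurableSet_Ioi
  have : x ^ ((n:ℝ) + 1 - 1) = x ^ n := by
    rw [add_sub_cancel_right, Real.rpow_natCast]
  beta_reduce
  rw [this, mul_comm]

lemma wfun_integrableOn_Ioi (k : ℕ) (x : ℝ) : IntegrableOn (wfun k) (Ioi x) := by
  have h0 : IntegrableOn (wfun k) (Ioi (0:ℝ)) := pow_mul_exp_integrableOn_Ioi0 _
  rcases le_or_gt 0 x with hx | hx
  · exact h0.mono_set (Ioi_subset_Ioi hx)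
  · have : Ioi x = Ioc x 0 ∪ Ioi (0:ℝ) := by
      rw [Ioc_union_Ioi_eq_Ioi hx.le]
    rw [this]
    exact ((wfun_cont k).continuousOn.integrableOn_compact isCompact_Icc |>.mono_set
      Ioc_subset_Icc_self).union h0

lemma uGamma_eq_wfun (k : ℕ) (x : ℝ) : uGamma k x = ∫ s in Ioi x, wfun k s := rfl

lemma uGamma_eq (k : ℕ) (x : ℝ) :
    uGamma k x = uGamma k 0 - ∫ s in (0:ℝ)..x, wfun k s := by
  rw [uGamma_eq_wfun, uGamma_eq_wfun]
  rcases le_or_gt 0 x with hx | hx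
  · rw [intervalIntegral.integral_of_le hx, ← Ioc_union_Ioi_eq_Ioi hx,
      setIntegral_union Ioc_disjoint_Ioi_same measurableSet_Ioi
        ((wfun_integrableOn_Ioi k 0).mono_set Ioc_subset_Ioi_self) (wfun_integrableOn_Ioi k x)]
    ring
  · rw [intervalIntegral.integral_of_ge hx.le, ← Ioc_union_Ioi_eq_Ioi hx.le,
      setIntegral_union Ioc_disjoint_Ioi_same measurableSet_Ioi
        ((wfun_integrableOn_Ioi k x).mono_set Ioc_subset_Ioi_self) (wfun_integrableOn_Ioi k 0)]
    ring

lemma uGamma_cont (k : ℕ) : Continuous (uGamma k) := by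
  have : Continuous fun x : ℝ => ∫ s in (0:ℝ)..x, wfun k s :=
    intervalIntegral.continuous_primitive
      (fun a b => (wfun_cont k).intervalIntegrable a b) 0
  have h : Continuous fun x : ℝ => uGamma k 0 - ∫ s in (0:ℝ)..x, wfun k s :=
    continuous_const.sub this
  exact h.congr fun x => (uGamma_eq k x).symm

lemma uGamma_nonneg (k : ℕ) {x : ℝ} (hx : 0 ≤ x) : 0 ≤ uGamma k x := by
  rw [uGamma_eq_wfun]
  exact setIntegral_nonneg measurableSet_Ioi fun s hs => wfun_nonneg k (hx.trans (le_of_lt hs))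

lemma uGamma_le (k : ℕ) {x : ℝ} (hx : 0 ≤ x) : uGamma k x ≤ uGamma k 0 := by
  rw [uGamma_eq k x, sub_le_self_iff]
  exact intervalIntegral.integral_nonneg hx fun s hs => wfun_nonneg k hs.1

lemma LocInt.intervalIntegrable {f : ℝ → ℝ} (hf : LocallyIntegrable f) (a b : ℝ) :
    IntervalIntegrable f volume a b := by
  rw [intervalIntegrable_iff]
  exact (hf.integrableOn_isCompact isCompact_uIcc).mono_set uIoc_subset_uIcc

/-- FTC key lemma. -/
lemma ftc_exp_neg (lam : ℝ → ℝ) (hm : Measurable lam)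
    (hInt : ∀ a b : ℝ, IntervalIntegrable lam volume a b)
    (hrc : ∀ x, ContinuousWithinAt lam (Ioi x) x)
    {c t : ℝ} (hct : c ≤ t) :
    ∫ τ in c..t, lam τ * Real.exp (-(∫ x in τ..t, lam x)) =
      1 - Real.exp (-(∫ x in c..t, lam x)) := by
  set g : ℝ → ℝ := fun τ => ∫ x in t..τ, lam x with hg
  have hgc : Continuous g := intervalIntegral.continuous_primitive hInt t
  have key : ∀ τ : ℝ, Real.exp (-(∫ x in τ..t, lam x)) = Real.exp (g τ) := by
    intro τ
    rw [hg, intervalIntegral.integral_symm, neg_neg]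
  have hderiv : ∀ τ ∈ Ioo c t,
      HasDerivWithinAt (fun u => Real.exp (g u)) (lam τ * Real.exp (-(∫ x in τ..t, lam x)))
        (Ioi τ) τ := by
    intro τ _
    have h1 : HasDerivWithinAt g (lam τ) (Ici τ) τ :=
      intervalIntegral.integral_hasDerivWithinAt_right (hInt t τ)
        (hm.stronglyMeasurable.stronglyMeasurableAtFilter) (hrc τ)
    have h2 := h1.exp
    rw [key τ, mul_comm]
    exact h2.mono Ioi_subset_Ici_self
  have hcont : ContinuousOn (fun u => Real.exp (g u)) (Icc c t) :=
    (Real.continuous_exp.comp hgc).continuousOn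
  have hint : IntervalIntegrable (fun τ => lam τ * Real.exp (-(∫ x in τ..t, lam x)))
      volume c t := by
    refine (hInt c t).mul_continuousOn ?_
    exact (Continuous.continuousOn (by continuity)).congr fun τ _ => key τ
  have := intervalIntegral.integral_eq_sub_of_hasDeriv_right_of_le hct hcont hderiv hint
  rw [this, key c, hg]
  simp

noncomputable def mInt (mu : ℝ → ℝ) (t τ : ℝ) : ℝ := ∫ x in τ..t, mu x

noncomputable def cFun (mu : ℝ → ℝ) (t s : ℝ) : ℝ :=
  sInf ({τ ∈ Icc 0 t | mInt mu t τ < s} ∪ {t})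

section cfun
variable {mu : ℝ → ℝ} (hmu0 : ∀ x, 0 ≤ mu x)
  (hmuInt : ∀ a b : ℝ, IntervalIntegrable mu volume a b) {t : ℝ} (ht : 0 ≤ t)

include hmu0 hmuInt in
lemma mInt_antitone : Antitone (mInt mu t) := by
  intro τ τ' h
  have := intervalIntegral.integral_add_adjacent_intervals
    (hmuInt τ τ') (hmuInt τ' t)
  have h2 : mInt mu t τ = (∫ x in τ..τ', mu x) + mInt mu t τ' := by
    rw [mInt, mInt, this]
  rw [h2]
  have : 0 ≤ ∫ x in τ..τ', mu x :=
    intervalIntegral.integral_nonneg h fun x _ => hmu0 x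
  linarith

include hmu0 in
lemma mInt_nonneg {τ : ℝ} (hτ : τ ≤ t) : 0 ≤ mInt mu t τ :=
  intervalIntegral.integral_nonneg hτ fun x _ => hmu0 x

include hmuInt in
lemma mInt_continuous : Continuous (mInt mu t) := by
  have : Continuous fun τ => ∫ x in t..τ, mu x :=
    intervalIntegral.continuous_primitive hmuInt t
  have h : Continuous fun τ => -∫ x in t..τ, mu x := this.neg
  exact h.congr fun τ => by rw [mInt, intervalIntegral.integral_symm]; ring

include ht in
lemma cFun_mem (s : ℝ) : cFun mu t s ∈ Icc 0 t := by
  constructor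
  · apply le_csInf ⟨t, by simp⟩
    rintro y (⟨⟨h0, _⟩, _⟩ | rfl)
    · exact h0
    · exact ht
  · exact csInf_le ⟨0, by rintro y (⟨⟨h0, _⟩, _⟩ | rfl) <;> [exact h0; exact ht]⟩
      (mem_union_right _ rfl)

include hmu0 hmuInt in
lemma cFun_lt_imp {s τ : ℝ} (hτ : τ ≤ t) (h : cFun mu t s < τ) : mInt mu t τ < s := by
  obtain ⟨y, hy, hyτ⟩ := exists_lt_of_csInf_lt (⟨t, by simp⟩ : _) h
  rcases hy with ⟨⟨_, _⟩, hys⟩ | rfl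
  · exact lt_of_le_of_lt (mInt_antitone hmu0 hmuInt hyτ.le) hys
  · linarith

lemma imp_cFun_le {s τ : ℝ} (hτ : τ ∈ Icc 0 t) (h : mInt mu t τ < s) : cFun mu t s ≤ τ :=
  csInf_le ⟨0, by rintro y (⟨⟨h0, _⟩, _⟩ | rfl) <;> [exact h0; exact hτ.1.trans hτ.2]⟩
    (mem_union_left _ ⟨hτ, h⟩)

lemma cFun_antitone : Antitone (cFun mu t) := by
  intro s s' h
  apply csInf_le_csInf
  · refine ⟨min 0 t, ?_⟩
    rintro y (⟨⟨h0, _⟩, _⟩ | rfl)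
    · exact le_trans (min_le_left _ _) h0
    · exact min_le_right _ _
  · exact ⟨t, by simp⟩
  · rintro y (⟨hy, hys⟩ | rfl)
    · exact mem_union_left _ ⟨hy, lt_of_lt_of_le hys h⟩
    · exact mem_union_right _ rfl

include hmu0 in
lemma cFun_of_nonpos {s : ℝ} (hs : s ≤ 0) : cFun mu t s = t := by
  have : {τ ∈ Icc 0 t | mInt mu t τ < s} = ∅ := by
    ext τ
    simp only [mem_setOf_eq, mem_empty_iff_false, iff_false]
    rintro ⟨⟨_, hτt⟩, hlt⟩
    exact absurd hlt (not_lt.2 (hs.trans (mInt_nonneg hmu0 hτt)))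
  rw [cFun, this, empty_union, csInf_singleton]
end cfun

lemma key_repr (mu : ℝ → ℝ) (hmu0 : ∀ x, 0 ≤ mu x)
    (hmuInt : ∀ a b : ℝ, IntervalIntegrable mu volume a b)
    (k : ℕ) {t : ℝ} (ht : 0 < t)
    (lam : ℝ → ℝ) (hm : Measurable lam) (hl0 : ∀ x, 0 ≤ lam x) (A : ℝ)
    (hA : ∀ x, lam x ≤ A)
    (hInt : ∀ a b : ℝ, IntervalIntegrable lam volume a b)
    (hrc : ∀ x, ContinuousWithinAt lam (Ioi x) x) :
    (∫ τ in (0:ℝ)..t, lam τ * Real.exp (-∫ x in τ..t, lam x) * uGamma k (∫ x in τ..t, mu x))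
      = ∫ s, wfun k s * (1 - Real.exp (-(∫ x in (cFun mu t s)..t, lam x))) := by
  set u : ℝ → ℝ := fun τ => lam τ * Real.exp (-mInt lam t τ) with hu
  have hLcont : Continuous (mInt lam t) := mInt_continuous hInt
  have humeas : Measurable u := hm.mul (Real.continuous_exp.comp hLcont.neg).measurable
  have huA : ∀ τ, τ ≤ t → u τ ≤ A := by
    intro τ hτ
    have h1 : Real.exp (-mInt lam t τ) ≤ 1 := by
      rw [Real.exp_le_one_iff, neg_nonpos]
      exact mInt_nonneg hl0 hτ
    calc u τ ≤ lam τ * 1 := by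
          exact mul_le_mul_of_nonneg_left h1 (hl0 τ)
      _ = lam τ := mul_one _
      _ ≤ A := hA τ
  have hu0 : ∀ τ, 0 ≤ u τ := fun τ => mul_nonneg (hl0 τ) (Real.exp_pos _).le
  set Φ : ℝ × ℝ → ℝ :=
    fun p => u p.1 * ({q : ℝ × ℝ | mInt mu t q.1 < q.2}.indicator (fun q => wfun k q.2) p)
    with hΦ
  have hΦeq : ∀ τ s : ℝ, Φ (τ, s) = u τ * (Ioi (mInt mu t τ)).indicator (wfun k) s := by
    intro τ s
    simp only [hΦ, Set.indicator, mem_setOf_eq, mem_Ioi]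
  have hSmeas : MeasurableSet {q : ℝ × ℝ | mInt mu t q.1 < q.2} := by
    exact measurableSet_lt ((mInt_continuous hmuInt).measurable.comp measurable_fst)
      measurable_snd
  have hΦmeas : Measurable Φ :=
    (humeas.comp measurable_fst).mul
      (((wfun_cont k).measurable.comp measurable_snd).indicator hSmeas)
  have hdom : Integrable (fun p : ℝ × ℝ => A * (Ioi (0:ℝ)).indicator (wfun k) p.2)
      ((volume.restrict (Ioc 0 t)).prod volume) := by
    refine Integrable.mul_prod (f := fun _ : ℝ => A) (g := (Ioi (0:ℝ)).indicator (wfun k)) ?_ ?_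
    · exact (integrableOn_const (by simp [ht.le])).mono_set subset_rfl
    · exact (wfun_integrableOn_Ioi k 0).integrable_indicator measurableSet_Ioi
  have haefst : ∀ᵐ p : ℝ × ℝ ∂((volume.restrict (Ioc 0 t)).prod volume), p.1 ∈ Ioc 0 t := by
    have : (volume.restrict (Ioc 0 t)).prod (volume : Measure ℝ)
        = ((volume : Measure ℝ).prod volume).restrict ((Ioc 0 t) ×ˢ univ) := by
      rw [← Measure.prod_restrict, Measure.restrict_univ]
    rw [this]
    filter_upwards [ae_restrict_mem (measurableSet_Ioc.prod MeasurableSet.univ)] with p hp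
    exact hp.1
  have hA0 : 0 ≤ A := (hl0 0).trans (hA 0)
  have hΦint : Integrable Φ ((volume.restrict (Ioc 0 t)).prod volume) := by
    refine Integrable.mono' hdom hΦmeas.aestronglyMeasurable ?_
    filter_upwards [haefst] with p hp
    rw [hΦeq p.1 p.2]
    have hm0 : 0 ≤ mInt mu t p.1 := mInt_nonneg hmu0 hp.2
    rcases le_or_gt p.2 (mInt mu t p.1) with hc | hc
    · rw [Set.indicator_of_notMem (by simpa using hc)]
      simp only [mul_zero, norm_zero]
      exact mul_nonneg hA0 (Set.indicator_nonneg (fun s hs => wfun_nonneg k (le_of_lt hs)) _)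
    · have h2 : (Ioi (0:ℝ)).indicator (wfun k) p.2 = wfun k p.2 :=
        Set.indicator_of_mem (mem_Ioi.2 (lt_of_le_of_lt hm0 hc)) _
      rw [Set.indicator_of_mem (by simpa using hc), h2]
      have hw : 0 ≤ wfun k p.2 := wfun_nonneg k (hm0.trans hc.le)
      rw [Real.norm_eq_abs, abs_of_nonneg (mul_nonneg (hu0 _) hw)]
      exact mul_le_mul_of_nonneg_right (huA _ hp.2) hw
  have step1 : (∫ τ in (0:ℝ)..t,
        lam τ * Real.exp (-∫ x in τ..t, lam x) * uGamma k (∫ x in τ..t, mu x))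
      = ∫ τ in Ioc 0 t, ∫ s, Φ (τ, s) := by
    rw [intervalIntegral.integral_of_le ht.le]
    refine setIntegral_congr_ae measurableSet_Ioc ?_
    filter_upwards with τ _
    have : ∫ s, Φ (τ, s) = u τ * ∫ s in Ioi (mInt mu t τ), wfun k s := by
      simp only [hΦeq]
      rw [MeasureTheory.integral_const_mul, MeasureTheory.integral_indicator measurableSet_Ioi]
    rw [this, ← uGamma_eq_wfun, hu]
    simp only [mInt, mul_assoc]
  have step4 : (∫ τ in Ioc 0 t, ∫ s, Φ (τ, s))
      = ∫ s, ∫ τ in Ioc 0 t, Φ (τ, s) := by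
    exact MeasureTheory.integral_integral_swap hΦint
  have step5 : ∀ s : ℝ, (∫ τ in Ioc 0 t, Φ (τ, s))
      = wfun k s * (1 - Real.exp (-(∫ x in (cFun mu t s)..t, lam x))) := by
    intro s
    set c := cFun mu t s with hc
    have hcmem : c ∈ Icc 0 t := cFun_mem ht.le s
    have hcongr : ∫ τ in Ioc 0 t, Φ (τ, s)
        = ∫ τ in Ioc 0 t, wfun k s * (Ioc c t).indicator u τ := by
      refine setIntegral_congr_ae measurableSet_Ioc ?_
      have hne : ∀ᵐ τ : ℝ, τ ≠ c := by
        rw [ae_iff]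
        have h : {a : ℝ | ¬ a ≠ c} = {c} := by ext x; simp
        rw [h]; exact measure_singleton c
      filter_upwards [hne] with τ hτne hτ
      rw [hΦeq]
      rcases lt_or_ge (mInt mu t τ) s with hms | hms
      · have hcτ : c < τ :=
          lt_of_le_of_ne (imp_cFun_le (Ioc_subset_Icc_self hτ) hms) (Ne.symm hτne)
        rw [Set.indicator_of_mem (by simpa using hms),
          Set.indicator_of_mem (mem_Ioc.2 ⟨hcτ, hτ.2⟩)]
        ring
      · have hcτ : ¬ (c < τ) := by
          intro hlt
          exact absurd (cFun_lt_imp hmu0 hmuInt hτ.2 hlt) (not_lt.2 hms)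
        rw [Set.indicator_of_notMem (by simpa using hms),
          Set.indicator_of_notMem (by simp [mem_Ioc]; intro h; exact absurd h hcτ)]
        ring
    rw [hcongr]
    rw [MeasureTheory.integral_const_mul, MeasureTheory.setIntegral_indicator measurableSet_Ioc]
    have hinter : Ioc 0 t ∩ Ioc c t = Ioc c t := by
      rw [Set.Ioc_inter_Ioc, max_eq_right hcmem.1, min_self]
    rw [hinter, ← intervalIntegral.integral_of_le hcmem.2]
    have := ftc_exp_neg lam hm hInt hrc hcmem.2
    rw [hu]
    rw [show (fun τ => lam τ * Real.exp (-mInt lam t τ)) =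
        (fun τ => lam τ * Real.exp (-(∫ x in τ..t, lam x))) from rfl, this]
  rw [step1, step4]
  exact MeasureTheory.integral_congr_ae (Filter.Eventually.of_forall step5)

/-! ### facts about step functions -/

section lamof
variable {M : ℕ} {Δ : ℝ} (hΔ : 0 < Δ) (lamOf : (Fin M → ℝ) → ℝ → ℝ)
  (hlamOf : ∀ a x, lamOf a x = ∑ m : Fin M,
      a m * Set.indicator (Set.Ico ((m : ℕ) * Δ) (((m : ℕ) + 1) * Δ)) (fun _ => (1:ℝ)) x)

lemma indicator_Ico_rc (α β x : ℝ) :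
    ContinuousWithinAt ((Ico α β).indicator (fun _ => (1:ℝ))) (Ioi x) x := by
  set f := (Ico α β).indicator (fun _ => (1:ℝ)) with hf
  have : ∀ᶠ y in 𝓝[>] x, f y = f x := by
    rcases lt_or_ge x α with h1 | h1
    · filter_upwards [Ioo_mem_nhdsGT_of_mem (show x ∈ Ico x α from ⟨le_refl x, h1⟩)] with y hy
      rw [hf, Set.indicator_of_notMem (fun hmem => absurd hmem.1 (not_le.2 hy.2)),
        Set.indicator_of_notMem (fun hmem => absurd hmem.1 (not_le.2 h1))]
    · rcases lt_or_ge x β with h2 | h2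
      · filter_upwards [Ioo_mem_nhdsGT_of_mem (show x ∈ Ico x β from ⟨le_refl x, h2⟩)] with y hy
        rw [hf, Set.indicator_of_mem (show y ∈ Ico α β from ⟨h1.trans hy.1.le, hy.2⟩),
          Set.indicator_of_mem (show x ∈ Ico α β from ⟨h1, h2⟩)]
      · filter_upwards [self_mem_nhdsWithin] with y hy
        rw [hf, Set.indicator_of_notMem (fun hmem => absurd hmem.2
            (not_lt.2 (h2.trans (le_of_lt hy)))),
          Set.indicator_of_notMem (fun hmem => absurd hmem.2 (not_lt.2 h2))]
  exact (continuousWithinAt_const (b := f x)).congr_of_eventuallyEq this rfl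

include hlamOf in
lemma lamOf_meas (a : Fin M → ℝ) : Measurable (lamOf a) := by
  have : lamOf a = fun x => ∑ m : Fin M,
      a m * Set.indicator (Set.Ico ((m : ℕ) * Δ) (((m : ℕ) + 1) * Δ)) (fun _ => (1:ℝ)) x := by
    funext x; exact hlamOf a x
  rw [this]
  exact Finset.measurable_sum _ fun m _ =>
    (measurable_const.indicator measurableSet_Ico).const_mul _

include hlamOf in
lemma lamOf_nonneg {a : Fin M → ℝ} (ha : ∀ m, 0 ≤ a m) (x : ℝ) : 0 ≤ lamOf a x := by
  rw [hlamOf]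
  exact Finset.sum_nonneg fun m _ => mul_nonneg (ha m)
    (Set.indicator_nonneg (fun _ _ => zero_le_one) _)

include hlamOf in
lemma lamOf_le {a : Fin M → ℝ} (ha : ∀ m, 0 ≤ a m) (x : ℝ) :
    lamOf a x ≤ ∑ m : Fin M, a m := by
  rw [hlamOf]
  refine Finset.sum_le_sum fun m _ => ?_
  rcases Set.indicator_eq_zero_or_self (Set.Ico ((m : ℕ) * Δ) (((m : ℕ) + 1) * Δ))
    (fun _ => (1:ℝ)) x with h | h
  · rw [h, mul_zero]; exact ha m
  · rw [h, mul_one]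

include hlamOf in
lemma lamOf_rc (a : Fin M → ℝ) (x : ℝ) : ContinuousWithinAt (lamOf a) (Ioi x) x := by
  have : lamOf a = fun y => ∑ m : Fin M,
      a m * Set.indicator (Set.Ico ((m : ℕ) * Δ) (((m : ℕ) + 1) * Δ)) (fun _ => (1:ℝ)) y := by
    funext y; exact hlamOf a y
  rw [this]
  exact tendsto_finset_sum _ fun m _ =>
    Filter.Tendsto.const_mul (a m) (indicator_Ico_rc _ _ x)

include hlamOf in
lemma lamOf_intInt {a : Fin M → ℝ} (ha : ∀ m, 0 ≤ a m) (c d : ℝ) :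
    IntervalIntegrable (lamOf a) volume c d := by
  rw [intervalIntegrable_iff]
  refine Integrable.mono' (g := fun _ => ∑ m : Fin M, a m)
    (integrableOn_const measure_Ioc_lt_top.ne)
    ((lamOf_meas lamOf hlamOf a).aestronglyMeasurable) ?_
  filter_upwards with x
  rw [Real.norm_eq_abs, abs_of_nonneg (lamOf_nonneg lamOf hlamOf ha x)]
  exact lamOf_le lamOf hlamOf ha x

include hlamOf in
lemma lamOf_zero_of_neg (hΔ0 : 0 ≤ Δ) (a : Fin M → ℝ) {x : ℝ} (hx : x < 0) :
    lamOf a x = 0 := by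
  rw [hlamOf]
  refine Finset.sum_eq_zero fun m _ => ?_
  rw [Set.indicator_of_notMem, mul_zero]
  rintro ⟨h1, _⟩
  have : (0:ℝ) ≤ (m:ℕ) * Δ := mul_nonneg (Nat.cast_nonneg _) hΔ0
  linarith

include hlamOf in
lemma lamOf_combo (a b : Fin M → ℝ) (p q : ℝ) (x : ℝ) :
    lamOf (p • a + q • b) x = p * lamOf a x + q * lamOf b x := by
  rw [hlamOf, hlamOf, hlamOf, Finset.mul_sum, Finset.mul_sum, ← Finset.sum_add_distrib]
  refine Finset.sum_congr rfl fun m _ => ?_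
  simp only [Pi.add_apply, Pi.smul_apply, smul_eq_mul]
  ring

end lamof

/-- for `Δ = T/M`, breakpoints `τ_m = m Δ` and
`λ_a(t) = Σ_{m=1}^M a_m · 1[τ_{m-1} ≤ t < τ_m]`, the functions
`a ↦ ∫_0^T f_k(t; λ_a, μ) dt` and (for each fixed `t`) `a ↦ f_k(t; λ_a, μ)` are
concave on the nonnegative orthant of `ℝ^M`. -/
theorem stmt12 (mu : ℝ → ℝ) (hmu0 : ∀ x, 0 ≤ mu x) (hmuInt : LocallyIntegrable mu)
    (k : ℕ) (hk : 1 ≤ k) (T : ℝ) (hT : 0 < T) (M : ℕ) (hM : 1 ≤ M)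
    (Δ : ℝ) (hΔ : Δ = T / M)
    (lamOf : (Fin M → ℝ) → ℝ → ℝ)
    (hlamOf : ∀ a x, lamOf a x = ∑ m : Fin M,
      a m * Set.indicator (Set.Ico ((m : ℕ) * Δ) (((m : ℕ) + 1) * Δ)) (fun _ => (1:ℝ)) x) :
    ConcaveOn ℝ {a : Fin M → ℝ | ∀ m, 0 ≤ a m}
        (fun a => ∫ t in (0:ℝ)..T, fk k (lamOf a) mu t) ∧
      ∀ t : ℝ, ConcaveOn ℝ {a : Fin M → ℝ | ∀ m, 0 ≤ a m}
        (fun a => fk k (lamOf a) mu t) := by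
  have hMpos : (0:ℝ) < M := by
    have : (1:ℝ) ≤ M := by exact_mod_cast hM
    linarith
  have hΔ0 : 0 < Δ := by rw [hΔ]; positivity
  set S : Set (Fin M → ℝ) := {a | ∀ m, 0 ≤ a m} with hS
  have hconv : Convex ℝ S := by
    intro a ha b hb p q hp hq hpq m
    simp only [Pi.add_apply, Pi.smul_apply, smul_eq_mul]
    exact add_nonneg (mul_nonneg hp (ha m)) (mul_nonneg hq (hb m))
  have hmuII : ∀ a b : ℝ, IntervalIntegrable mu volume a b :=
    LocInt.intervalIntegrable hmuInt
  set C : ℝ := 1 / (Nat.factorial (k - 1) : ℝ) with hCdef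
  have hC0 : 0 ≤ C := by positivity
  have part2 : ∀ t : ℝ, ConcaveOn ℝ S (fun a => fk k (lamOf a) mu t) := by
    intro t
    rcases le_or_gt t 0 with ht | ht
    · have hzero : ∀ a : Fin M → ℝ, fk k (lamOf a) mu t = 0 := by
        intro a
        rw [fk]
        have hne : ∀ᵐ τ : ℝ, τ ≠ 0 := by
          rw [ae_iff]
          have h : {x : ℝ | ¬ x ≠ 0} = {0} := by ext x; simp
          rw [h]; exact measure_singleton 0
        have h0 : (∫ τ in (0:ℝ)..t, lamOf a τ * Real.exp (-∫ x in τ..t, lamOf a x) *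
            uGamma k (∫ x in τ..t, mu x)) = 0 := by
          rw [intervalIntegral.integral_of_ge ht, neg_eq_zero]
          have : ∫ τ in Ioc t 0, (lamOf a τ * Real.exp (-∫ x in τ..t, lamOf a x) *
              uGamma k (∫ x in τ..t, mu x)) = ∫ _ in Ioc t 0, (0:ℝ) := by
            refine setIntegral_congr_ae measurableSet_Ioc ?_
            filter_upwards [hne] with τ hτ0 hτ
            rw [lamOf_zero_of_neg lamOf hlamOf hΔ0.le a
              (lt_of_le_of_ne hτ.2 hτ0), zero_mul, zero_mul]
          rw [this, MeasureTheory.integral_zero]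
        rw [h0, mul_zero]
      have heq : (fun a => fk k (lamOf a) mu t) = fun _ => (0:ℝ) := funext hzero
      rw [heq]
      exact concaveOn_const 0 hconv
    · -- t > 0
      set c : ℝ → ℝ := cFun mu t with hcdef
      set Ψ : (Fin M → ℝ) → ℝ → ℝ :=
        fun e s => wfun k s * (1 - Real.exp (-(mInt (lamOf e) t (c s)))) with hΨ
      have hrepr : ∀ e, e ∈ S → fk k (lamOf e) mu t = C * ∫ s, Ψ e s := by
        intro e he
        rw [fk]
        congr 1
        exact key_repr mu hmu0 hmuII k ht (lamOf e) (lamOf_meas lamOf hlamOf e)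
          (lamOf_nonneg lamOf hlamOf he) (∑ m : Fin M, e m) (lamOf_le lamOf hlamOf he)
          (lamOf_intInt lamOf hlamOf he) (lamOf_rc lamOf hlamOf e)
      have hcmem : ∀ s, c s ∈ Icc 0 t := fun s => cFun_mem ht.le s
      have hint : ∀ e, e ∈ S → Integrable (Ψ e) volume := by
        intro e he
        have hmeasc : Measurable c := (cFun_antitone (mu := mu) (t := t)).measurable
        have hLc : Continuous (mInt (lamOf e) t) :=
          mInt_continuous (lamOf_intInt lamOf hlamOf he)
        have hΨmeas : Measurable (Ψ e) := by
          apply ((wfun_cont k).measurable).mul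
          exact (measurable_const.sub
            ((Real.continuous_exp.measurable).comp
              ((hLc.measurable.comp hmeasc).neg)))
        refine Integrable.mono'
          ((wfun_integrableOn_Ioi k 0).integrable_indicator measurableSet_Ioi)
          hΨmeas.aestronglyMeasurable ?_
        filter_upwards with s
        rcases le_or_gt s 0 with hs | hs
        · have hct : c s = t := cFun_of_nonpos hmu0 hs
          have : Ψ e s = 0 := by
            rw [hΨ]
            simp only [hct, mInt, intervalIntegral.integral_same, neg_zero, Real.exp_zero,
              sub_self, mul_zero]
          rw [this, norm_zero]
          exact Set.indicator_nonneg (fun x hx => wfun_nonneg k (le_of_lt hx)) s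
        · have hL0 : 0 ≤ mInt (lamOf e) t (c s) :=
            mInt_nonneg (lamOf_nonneg lamOf hlamOf he) (hcmem s).2
          have he1 : Real.exp (-(mInt (lamOf e) t (c s))) ≤ 1 := by
            rw [Real.exp_le_one_iff, neg_nonpos]; exact hL0
          have he0 : (0:ℝ) < Real.exp (-(mInt (lamOf e) t (c s))) := Real.exp_pos _
          have hw : 0 ≤ wfun k s := wfun_nonneg k hs.le
          rw [Set.indicator_of_mem (mem_Ioi.2 hs), hΨ]
          rw [Real.norm_eq_abs, abs_of_nonneg (mul_nonneg hw (by linarith))]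
          nlinarith
      refine ⟨hconv, ?_⟩
      intro a ha b hb p q hp hq hpq
      have hmix : p • a + q • b ∈ S := hconv ha hb hp hq hpq
      have hlin : ∀ s, mInt (lamOf (p • a + q • b)) t (c s)
          = p * mInt (lamOf a) t (c s) + q * mInt (lamOf b) t (c s) := by
        intro s
        rw [mInt, mInt, mInt]
        have h1 : (∫ x in (c s)..t, lamOf (p • a + q • b) x)
            = ∫ x in (c s)..t, (p * lamOf a x + q * lamOf b x) :=
          intervalIntegral.integral_congr fun x _ => lamOf_combo lamOf hlamOf a b p q x
        rw [h1, intervalIntegral.integral_add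
          ((lamOf_intInt lamOf hlamOf ha (c s) t).const_mul p)
          ((lamOf_intInt lamOf hlamOf hb (c s) t).const_mul q),
          intervalIntegral.integral_const_mul, intervalIntegral.integral_const_mul]
      have hptwise : ∀ s, p * Ψ a s + q * Ψ b s ≤ Ψ (p • a + q • b) s := by
        intro s
        rcases le_or_gt s 0 with hs | hs
        · have hct : c s = t := cFun_of_nonpos hmu0 hs
          simp only [hΨ, hct, mInt, intervalIntegral.integral_same, neg_zero, Real.exp_zero,
            sub_self, mul_zero]
          linarith
        · set A' := mInt (lamOf a) t (c s)
          set B' := mInt (lamOf b) t (c s)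
          have hexp : Real.exp (p * (-A') + q * (-B')) ≤
              p * Real.exp (-A') + q * Real.exp (-B') := by
            have := convexOn_exp.2 (mem_univ (-A')) (mem_univ (-B')) hp hq hpq
            simpa [smul_eq_mul] using this
          have hw : 0 ≤ wfun k s := wfun_nonneg k hs.le
          show p * (wfun k s * (1 - Real.exp (-A'))) + q * (wfun k s * (1 - Real.exp (-B')))
            ≤ wfun k s * (1 - Real.exp (-(mInt (lamOf (p • a + q • b)) t (c s))))
          rw [hlin s]
          have harg : -(p * A' + q * B') = p * (-A') + q * (-B') := by ring
          rw [show -(p * mInt (lamOf a) t (c s) + q * mInt (lamOf b) t (c s))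
              = p * (-A') + q * (-B') by ring]
          nlinarith [mul_le_mul_of_nonneg_left hexp hw]
      have hIab : Integrable (fun s => p * Ψ a s + q * Ψ b s) volume :=
        ((hint a ha).const_mul p).add ((hint b hb).const_mul q)
      have hmono : (∫ s, (p * Ψ a s + q * Ψ b s)) ≤ ∫ s, Ψ (p • a + q • b) s :=
        MeasureTheory.integral_mono hIab (hint _ hmix) hptwise
      rw [MeasureTheory.integral_add ((hint a ha).const_mul p) ((hint b hb).const_mul q),
        MeasureTheory.integral_const_mul, MeasureTheory.integral_const_mul] at hmono
      simp only [smul_eq_mul]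
      rw [hrepr a ha, hrepr b hb, hrepr _ hmix]
      nlinarith [mul_le_mul_of_nonneg_left hmono hC0]
  refine ⟨?_, part2⟩
  -- outer integral
  have hfkInt : ∀ a, a ∈ S → IntervalIntegrable (fun t => fk k (lamOf a) mu t) volume 0 T := by
    intro a ha
    have hmeas := lamOf_meas lamOf hlamOf a
    have hInt := lamOf_intInt lamOf hlamOf ha
    set A : ℝ := ∑ m : Fin M, a m with hA
    have hA0 : 0 ≤ A := Finset.sum_nonneg fun m _ => ha m
    set P : ℝ → ℝ := fun x => ∫ u in (0:ℝ)..x, lamOf a u with hP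
    set Q : ℝ → ℝ := fun x => ∫ u in (0:ℝ)..x, mu u with hQ
    have hPc : Continuous P := intervalIntegral.continuous_primitive hInt 0
    have hQc : Continuous Q := intervalIntegral.continuous_primitive hmuII 0
    have hsubP : ∀ τ t : ℝ, (∫ x in τ..t, lamOf a x) = P t - P τ := by
      intro τ t
      rw [hP, eq_sub_iff_add_eq, add_comm]
      exact intervalIntegral.integral_add_adjacent_intervals (hInt 0 τ) (hInt τ t)
    have hsubQ : ∀ τ t : ℝ, (∫ x in τ..t, mu x) = Q t - Q τ := by
      intro τ t
      rw [hQ, eq_sub_iff_add_eq, add_comm]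
      exact intervalIntegral.integral_add_adjacent_intervals (hmuII 0 τ) (hmuII τ t)
    set g : ℝ × ℝ → ℝ := fun pr =>
      lamOf a pr.2 * Real.exp (-(P pr.1 - P pr.2)) * uGamma k (Q pr.1 - Q pr.2) with hg
    set Fi : ℝ × ℝ → ℝ := ({pr : ℝ × ℝ | 0 < pr.2 ∧ pr.2 ≤ pr.1}.indicator g) with hFi
    have hgm : Measurable g := by
      apply Measurable.mul
      · apply Measurable.mul (hmeas.comp measurable_snd)
        exact (Real.continuous_exp.comp
          (((hPc.comp continuous_fst).sub (hPc.comp continuous_snd)).neg)).measurable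
      · exact ((uGamma_cont k).comp
          ((hQc.comp continuous_fst).sub (hQc.comp continuous_snd))).measurable
    have hSm : MeasurableSet {pr : ℝ × ℝ | 0 < pr.2 ∧ pr.2 ≤ pr.1} :=
      (measurableSet_lt measurable_const measurable_snd).inter
        (measurableSet_le measurable_snd measurable_fst)
    have hFmeas : Measurable Fi := hgm.indicator hSm
    set φ : ℝ → ℝ := fun t => C * ∫ τ, Fi (t, τ) with hφ
    have hφmeas : StronglyMeasurable φ :=
      (hFmeas.stronglyMeasurable.integral_prod_right').const_mul C
    have hindrw : ∀ t : ℝ, (fun τ => Fi (t, τ)) = (Ioc 0 t).indicator (fun τ => g (t, τ)) := by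
      intro t
      funext τ
      rw [hFi]
      by_cases hmem : τ ∈ Ioc 0 t
      · rw [Set.indicator_of_mem (show (t, τ) ∈ {pr : ℝ × ℝ | 0 < pr.2 ∧ pr.2 ≤ pr.1} from
          ⟨hmem.1, hmem.2⟩), Set.indicator_of_mem hmem]
      · rw [Set.indicator_of_notMem (show (t, τ) ∉ {pr : ℝ × ℝ | 0 < pr.2 ∧ pr.2 ≤ pr.1} from
          fun hc => hmem ⟨hc.1, hc.2⟩), Set.indicator_of_notMem hmem]
    have hfkeq : ∀ t ∈ Ioc 0 T, fk k (lamOf a) mu t = φ t := by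
      intro t htmem
      rw [fk, hφ]
      congr 1
      rw [show (∫ τ, Fi (t, τ)) = ∫ τ, (Ioc 0 t).indicator (fun τ => g (t, τ)) τ by
          rw [hindrw t],
        MeasureTheory.integral_indicator measurableSet_Ioc,
        intervalIntegral.integral_of_le htmem.1.le]
      refine setIntegral_congr_ae measurableSet_Ioc ?_
      filter_upwards with τ _
      rw [hg]
      simp only
      rw [hsubP τ t, hsubQ τ t]
    have hgbound : ∀ t ∈ Ioc 0 T, ∀ τ ∈ Ioc 0 t, ‖g (t, τ)‖ ≤ A * uGamma k 0 := by
      intro t _ τ hτ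
      have h1 : 0 ≤ lamOf a τ := lamOf_nonneg lamOf hlamOf ha τ
      have h2 : lamOf a τ ≤ A := lamOf_le lamOf hlamOf ha τ
      have h3 : P t - P τ = ∫ x in τ..t, lamOf a x := (hsubP τ t).symm
      have h4 : Q t - Q τ = ∫ x in τ..t, mu x := (hsubQ τ t).symm
      have h5 : 0 ≤ P t - P τ := by
        rw [h3]
        exact intervalIntegral.integral_nonneg hτ.2 fun x _ => lamOf_nonneg lamOf hlamOf ha x
      have h6 : 0 ≤ Q t - Q τ := by
        rw [h4]
        exact intervalIntegral.integral_nonneg hτ.2 fun x _ => hmu0 x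
      have h7 : Real.exp (-(P t - P τ)) ≤ 1 := by
        rw [Real.exp_le_one_iff, neg_nonpos]; exact h5
      have h8 : 0 ≤ uGamma k (Q t - Q τ) := uGamma_nonneg k h6
      have h9 : uGamma k (Q t - Q τ) ≤ uGamma k 0 := uGamma_le k h6
      rw [hg]
      simp only
      rw [Real.norm_eq_abs, abs_of_nonneg (by positivity)]
      calc lamOf a τ * Real.exp (-(P t - P τ)) * uGamma k (Q t - Q τ)
          ≤ A * 1 * uGamma k 0 := by
            apply mul_le_mul _ h9 h8 (by positivity)
            apply mul_le_mul h2 h7 (Real.exp_pos _).le hA0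
        _ = A * uGamma k 0 := by ring
    have hφbound : ∀ t ∈ Ioc 0 T, ‖φ t‖ ≤ C * (A * uGamma k 0 * T) := by
      intro t htmem
      rw [hφ]
      simp only
      rw [Real.norm_eq_abs, abs_mul, abs_of_nonneg hC0]
      apply mul_le_mul_of_nonneg_left _ hC0
      rw [← Real.norm_eq_abs,
        show (∫ τ, Fi (t, τ)) = ∫ τ in Ioc 0 t, g (t, τ) by
          rw [show (∫ τ, Fi (t, τ)) = ∫ τ, (Ioc 0 t).indicator (fun τ => g (t, τ)) τ by
            rw [hindrw t], MeasureTheory.integral_indicator measurableSet_Ioc]]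
      have hb := norm_setIntegral_le_of_norm_le_const (μ := volume) (s := Ioc 0 t)
        (C := A * uGamma k 0) measure_Ioc_lt_top (hgbound t htmem)
      refine hb.trans ?_
      rw [measureReal_def, Real.volume_Ioc]
      have htT : t - 0 ≤ T := by
        have := htmem.2; linarith
      have h0t : (0:ℝ) ≤ t - 0 := by
        have := htmem.1; linarith
      rw [ENNReal.toReal_ofReal h0t]
      have hAg : 0 ≤ A * uGamma k 0 := mul_nonneg hA0 (uGamma_nonneg k le_rfl)
      calc A * uGamma k 0 * (t - 0) ≤ A * uGamma k 0 * T :=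
            mul_le_mul_of_nonneg_left htT hAg
        _ = A * uGamma k 0 * T := rfl
    rw [intervalIntegrable_iff_integrableOn_Ioc_of_le hT.le]
    have hφint : IntegrableOn φ (Ioc 0 T) := by
      refine Integrable.mono' (g := fun _ => C * (A * uGamma k 0 * T))
        (integrableOn_const measure_Ioc_lt_top.ne)
        hφmeas.aestronglyMeasurable.restrict ?_
      filter_upwards [ae_restrict_mem measurableSet_Ioc] with t htmem
      exact hφbound t htmem
    refine hφint.congr ?_
    filter_upwards [ae_restrict_mem measurableSet_Ioc] with t htmem
    exact (hfkeq t htmem).symm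
  refine ⟨hconv, ?_⟩
  intro a ha b hb p q hp hq hpq
  have hmix : p • a + q • b ∈ S := hconv ha hb hp hq hpq
  simp only [smul_eq_mul]
  have h1 : p * (∫ t in (0:ℝ)..T, fk k (lamOf a) mu t)
      + q * (∫ t in (0:ℝ)..T, fk k (lamOf b) mu t)
      = ∫ t in (0:ℝ)..T, (p * fk k (lamOf a) mu t + q * fk k (lamOf b) mu t) := by
    rw [intervalIntegral.integral_add ((hfkInt a ha).const_mul p)
      ((hfkInt b hb).const_mul q), intervalIntegral.integral_const_mul,
      intervalIntegral.integral_const_mul]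
  rw [h1]
  refine intervalIntegral.integral_mono_on hT.le
    (((hfkInt a ha).const_mul p).add ((hfkInt b hb).const_mul q)) (hfkInt _ hmix) ?_
  intro t _
  have := (part2 t).2 ha hb hp hq hpq
  simpa [smul_eq_mul] using this
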